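/- Let k ≥ 2 be an integer and D an oriented graph (a digraph with no 2-cycles and no loops). If the chromatic number of D is at least 8k−7, then D contains an antidirected cycle of length at least 2k. -/

import Mathlib

attribute [local instance] Classical.propDecidable

/-- `D` contains an antidirected cycle of length `2 * m`, with sources
`s 0, …, s (m-1)` and sinks `t 0, …, t (m-1)` arranged alternately:
`s i` sends arcs to `t i` and to `t (i-1)`. -/
def HasAntidirCycle {V : Type*} (D : V → V → Prop) (m : ℕ) : Prop :=
  ∃ s t : ZMod m → V,
    Function.Injective s ∧ Function.Injective t ∧ (∀ i j, s i ≠ t j) ∧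
    ∀ i, D (s i) (t i) ∧ D (s i) (t (i - 1))


lemma lemF {V : Type*} (D : V → V → Prop) (m : ℕ) (hm : 0 < m) (x : ℕ → V)
    (inj : ∀ i, i < 2*m → ∀ j, j < 2*m → x i = x j → i = j)
    (h1 : ∀ i, i < m → D (x (2*i)) (x (2*i+1)))
    (h2 : ∀ i, i + 1 < m → D (x (2*i+2)) (x (2*i+1)))
    (h3 : D (x 0) (x (2*m-1))) :
    HasAntidirCycle D m := by
  haveI : NeZero m := ⟨hm.ne'⟩
  refine ⟨fun i => x (2 * i.val), fun i => x (2 * i.val + 1), ?_, ?_, ?_, ?_⟩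
  · intro i j hij
    have h1' := ZMod.val_lt i; have h2' := ZMod.val_lt j
    have := inj _ (by omega) _ (by omega) hij
    exact ZMod.val_injective m (by omega)
  · intro i j hij
    have h1' := ZMod.val_lt i; have h2' := ZMod.val_lt j
    have := inj _ (by omega) _ (by omega) hij
    exact ZMod.val_injective m (by omega)
  · intro i j hij
    have h1' := ZMod.val_lt i; have h2' := ZMod.val_lt j
    have := inj _ (by omega) _ (by omega) hij
    omega
  · intro i
    refine ⟨h1 _ (ZMod.val_lt i), ?_⟩
    set j := (i - 1).val with hj
    have hjm : j < m := ZMod.val_lt _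
    have e1 : ((j + 1 : ℕ) : ZMod m) = i := by
      push_cast
      rw [hj, ZMod.natCast_rightInverse (i - 1)]
      ring
    have e2 : i.val = (j + 1) % m := by
      rw [← e1, ZMod.val_natCast]
    show D (x (2 * i.val)) (x (2 * j + 1))
    rcases lt_or_eq_of_le (Nat.succ_le_of_lt hjm) with hlt | heq
    · have hiv : i.val = j + 1 := by rw [e2, Nat.mod_eq_of_lt hlt]
      have h2i : 2 * i.val = 2*j+2 := by omega
      rw [h2i]
      exact h2 j (by omega)
    · have hv : i.val = 0 := by rw [e2, ← heq, Nat.mod_self]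
      have ha : 2 * i.val = 0 := by omega
      have hb : 2 * j + 1 = 2 * m - 1 := by omega
      rw [ha, hb]
      exact h3



lemma cardSingProd {V : Type*} (D : V → V → Prop) (a : V) (B : Finset V) :
    ((({a} : Finset V) ×ˢ B).filter (fun p => D p.1 p.2)).card
      = (B.filter (fun b => D a b)).card := by
  rw [Finset.singleton_product, Finset.filter_map, Finset.card_map]
  rfl

lemma cardProdSing {V : Type*} (D : V → V → Prop) (b : V) (A : Finset V) :
    ((A ×ˢ ({b} : Finset V)).filter (fun p => D p.1 p.2)).card
      = (A.filter (fun a => D a b)).card := by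
  rw [Finset.product_singleton, Finset.filter_map, Finset.card_map]
  rfl

lemma lemC {V : Type*} (D : V → V → Prop) (k : ℕ) (hk : 2 ≤ k) :
    ∀ s : ℕ, ∀ A B : Finset V, A.card + B.card ≤ s →
    (k-1) * (A.card + B.card - 1) < ((A ×ˢ B).filter (fun p => D p.1 p.2)).card →
    ∃ A' B' : Finset V, A' ⊆ A ∧ B' ⊆ B ∧ A'.Nonempty ∧
      (∀ a ∈ A', k ≤ (B'.filter (fun b => D a b)).card) ∧
      (∀ b ∈ B', k ≤ (A'.filter (fun a => D a b)).card) := by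
  intro s
  induction s with
  | zero =>
    intro A B hcard he
    exfalso
    have : A = ∅ := Finset.card_eq_zero.mp (by omega)
    subst this
    simp at he
  | succ n ih =>
    intro A B hcard he
    -- the filter is nonempty
    have hene : ∃ p ∈ (A ×ˢ B).filter (fun p => D p.1 p.2), True := by
      have : 0 < ((A ×ˢ B).filter (fun p => D p.1 p.2)).card := by omega
      obtain ⟨p, hp⟩ := Finset.card_pos.mp this
      exact ⟨p, hp, trivial⟩
    obtain ⟨p, hp, -⟩ := hene
    have hpA : p.1 ∈ A := (Finset.mem_product.mp (Finset.mem_filter.mp hp).1).1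
    have hpB : p.2 ∈ B := (Finset.mem_product.mp (Finset.mem_filter.mp hp).1).2
    have hAne : A.Nonempty := ⟨p.1, hpA⟩
    have hBne : B.Nonempty := ⟨p.2, hpB⟩
    have hs2 : 2 ≤ A.card + B.card := by
      have := Finset.card_pos.mpr hAne
      have := Finset.card_pos.mpr hBne
      omega
    by_cases hgood : (∀ a ∈ A, k ≤ (B.filter (fun b => D a b)).card) ∧
        (∀ b ∈ B, k ≤ (A.filter (fun a => D a b)).card)
    · exact ⟨A, B, subset_rfl, subset_rfl, hAne, hgood.1, hgood.2⟩
    · rw [not_and_or] at hgood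
      have key : ∀ (A₁ B₁ : Finset V), A₁.card + B₁.card + 1 = A.card + B.card →
          A₁ ⊆ A → B₁ ⊆ B →
          ((A ×ˢ B).filter (fun p => D p.1 p.2)).card
            ≤ ((A₁ ×ˢ B₁).filter (fun p => D p.1 p.2)).card + (k-1) →
          ∃ A' B' : Finset V, A' ⊆ A ∧ B' ⊆ B ∧ A'.Nonempty ∧
            (∀ a ∈ A', k ≤ (B'.filter (fun b => D a b)).card) ∧
            (∀ b ∈ B', k ≤ (A'.filter (fun a => D a b)).card) := by
        intro A₁ B₁ hc hsA hsB hle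
        have hmul : (k-1) * (A.card + B.card - 1)
            = (k-1) * (A₁.card + B₁.card - 1) + (k-1) := by
          rw [show A.card + B.card - 1 = (A₁.card + B₁.card - 1) + 1 by omega,
            Nat.mul_add, mul_one]
        have he1 : (k-1) * (A₁.card + B₁.card - 1)
            < ((A₁ ×ˢ B₁).filter (fun p => D p.1 p.2)).card := by omega
        obtain ⟨A', B', h1, h2, h3, h4, h5⟩ := ih A₁ B₁ (by omega) he1
        exact ⟨A', B', h1.trans hsA, h2.trans hsB, h3, h4, h5⟩
      rcases hgood with hbad | hbad
      · push_neg at hbad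
        obtain ⟨a, ha, hdeg⟩ := hbad
        refine key (A.erase a) B (by have : 0 < A.card := Finset.card_pos.mpr ⟨a, ha⟩; rw [Finset.card_erase_of_mem ha]; omega)
          (Finset.erase_subset _ _) subset_rfl ?_
        have hsplit : (A ×ˢ B).filter (fun p => D p.1 p.2)
            ⊆ ((A.erase a ×ˢ B).filter (fun p => D p.1 p.2))
              ∪ ((({a} : Finset V) ×ˢ B).filter (fun p => D p.1 p.2)) := by
          intro q hq
          rw [Finset.mem_filter, Finset.mem_product] at hq
          rw [Finset.mem_union, Finset.mem_filter, Finset.mem_filter,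
            Finset.mem_product, Finset.mem_product]
          by_cases hqa : q.1 = a
          · exact Or.inr ⟨⟨by simp [hqa], hq.1.2⟩, hq.2⟩
          · exact Or.inl ⟨⟨Finset.mem_erase.mpr ⟨hqa, hq.1.1⟩, hq.1.2⟩, hq.2⟩
        calc ((A ×ˢ B).filter (fun p => D p.1 p.2)).card
            ≤ _ := Finset.card_le_card hsplit
          _ ≤ ((A.erase a ×ˢ B).filter (fun p => D p.1 p.2)).card
              + ((({a} : Finset V) ×ˢ B).filter (fun p => D p.1 p.2)).card :=
            Finset.card_union_le _ _
          _ ≤ _ := by rw [cardSingProd]; exact Nat.add_le_add_left (by omega) _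
      · push_neg at hbad
        obtain ⟨b, hb, hdeg⟩ := hbad
        refine key A (B.erase b) (by have : 0 < B.card := Finset.card_pos.mpr ⟨b, hb⟩; rw [Finset.card_erase_of_mem hb]; omega)
          subset_rfl (Finset.erase_subset _ _) ?_
        have hsplit : (A ×ˢ B).filter (fun p => D p.1 p.2)
            ⊆ ((A ×ˢ B.erase b).filter (fun p => D p.1 p.2))
              ∪ ((A ×ˢ ({b} : Finset V)).filter (fun p => D p.1 p.2)) := by
          intro q hq
          rw [Finset.mem_filter, Finset.mem_product] at hq
          rw [Finset.mem_union, Finset.mem_filter, Finset.mem_filter,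
            Finset.mem_product, Finset.mem_product]
          by_cases hqb : q.2 = b
          · exact Or.inr ⟨⟨hq.1.1, by simp [hqb]⟩, hq.2⟩
          · exact Or.inl ⟨⟨hq.1.1, Finset.mem_erase.mpr ⟨hqb, hq.1.2⟩⟩, hq.2⟩
        calc ((A ×ˢ B).filter (fun p => D p.1 p.2)).card
            ≤ _ := Finset.card_le_card hsplit
          _ ≤ ((A ×ˢ B.erase b).filter (fun p => D p.1 p.2)).card
              + ((A ×ˢ ({b} : Finset V)).filter (fun p => D p.1 p.2)).card :=
            Finset.card_union_le _ _
          _ ≤ _ := by rw [cardProdSing]; exact Nat.add_le_add_left (by omega) _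

lemma lemG {V : Type*} [Fintype V] (D : V → V → Prop) (k : ℕ) (hk : 2 ≤ k)
    (A B : Finset V) (hdisj : Disjoint A B) (hAne : A.Nonempty)
    (hA : ∀ a ∈ A, k ≤ (B.filter (fun b => D a b)).card)
    (hB : ∀ b ∈ B, k ≤ (A.filter (fun a => D a b)).card) :
    ∃ m : ℕ, k ≤ m ∧ HasAntidirCycle D m := by
  obtain ⟨a₀, ha₀⟩ := hAne
  have hnotboth : ∀ v, v ∈ A → v ∈ B → False := fun v h1 h2 =>
    Finset.disjoint_left.mp hdisj h1 h2
  set adj : V → V → Prop :=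
    fun u v => (u ∈ A ∧ v ∈ B ∧ D u v) ∨ (v ∈ A ∧ u ∈ B ∧ D v u) with hadj
  have adj_symm : ∀ u v, adj u v → adj v u := by
    intro u v h
    rcases h with ⟨h1, h2, h3⟩ | ⟨h1, h2, h3⟩
    · exact Or.inr ⟨h1, h2, h3⟩
    · exact Or.inl ⟨h1, h2, h3⟩
  set P : ℕ → Prop :=
    fun n => ∃ l : List V, List.Chain' adj l ∧ l.Nodup ∧ l.length = n with hP
  -- a path of length 2 exists
  obtain ⟨b₀, hb₀⟩ : (B.filter (fun b => D a₀ b)).Nonempty := by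
    rw [← Finset.card_pos]
    have := hA a₀ ha₀; omega
  have hb₀B : b₀ ∈ B := (Finset.mem_filter.mp hb₀).1
  have hb₀D : D a₀ b₀ := (Finset.mem_filter.mp hb₀).2
  have hab : a₀ ≠ b₀ := fun h => hnotboth a₀ ha₀ (h ▸ hb₀B)
  have hP2 : P 2 := by
    refine ⟨[a₀, b₀], ?_, ?_, rfl⟩
    · exact List.isChain_cons_cons.mpr ⟨Or.inl ⟨ha₀, hb₀B, hb₀D⟩, List.isChain_singleton _⟩
    · simp [hab]
  have hcard2 : 2 ≤ Fintype.card V :=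
    Fintype.one_lt_card_iff_nontrivial.mpr ⟨⟨a₀, b₀, hab⟩⟩
  set N := Nat.findGreatest P (Fintype.card V) with hNdef
  have hNP : P N := Nat.findGreatest_spec hcard2 hP2
  have hN2 : 2 ≤ N := Nat.le_findGreatest hcard2 hP2
  have hmax : ∀ l : List V, List.Chain' adj l → l.Nodup → l.length ≤ N := by
    intro l hc hn
    by_contra hgt
    have hgr := Nat.findGreatest_is_greatest (P := P) (n := Fintype.card V)
      (k := l.length) (by omega) hn.length_le_card
    exact hgr ⟨l, hc, hn, rfl⟩
  obtain ⟨l, hchain, hnodup, hlen⟩ := hNP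
  set x : ℕ → V := fun i => l.getD i a₀ with hx
  have getx : ∀ i (h : i < N), x i = l.get ⟨i, by omega⟩ := by
    intro i h
    exact List.getD_eq_get l a₀ ⟨i, by omega⟩
  have inj : ∀ i, i < N → ∀ j, j < N → x i = x j → i = j := by
    intro i hi j hj hij
    rw [getx i hi, getx j hj] at hij
    have := (List.nodup_iff_injective_get.mp hnodup) hij
    exact congrArg Fin.val this
  have chain : ∀ i, i + 1 < N → adj (x i) (x (i+1)) := by
    intro i hi
    rw [getx i (by omega), getx (i+1) hi]
    exact List.isChain_iff_getElem.mp hchain i (by omega)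
  have hx01 : adj (x 0) (x 1) := chain 0 (by omega)
  have hx0 : x 0 ∈ A ∨ x 0 ∈ B := by
    rcases hx01 with ⟨h1, h2, h3⟩ | ⟨h1, h2, h3⟩
    · exact Or.inl h1
    · exact Or.inr h2
  -- alternation, sides as function of parity, depending on side of x 0
  have altA : ∀ (C C' : Finset V), Disjoint C C' → x 0 ∈ C →
      (∀ u v, adj u v → (u ∈ C ∧ v ∈ C') ∨ (u ∈ C' ∧ v ∈ C)) →
      ∀ i, i < N → (i % 2 = 0 → x i ∈ C) ∧ (i % 2 = 1 → x i ∈ C') := by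
    intro C C' hCd hx0C hsid
    intro i
    induction i with
    | zero => exact fun _ => ⟨fun _ => hx0C, by omega⟩
    | succ i ih =>
      intro hi
      have hprev := ih (by omega)
      have hadj := hsid _ _ (chain i (by omega))
      constructor
      · intro hpar
        rcases hadj with ⟨h1, h2⟩ | ⟨h1, h2⟩
        · exfalso
          have : x i ∈ C' := hprev.2 (by omega)
          exact Finset.disjoint_left.mp hCd h1 this
        · exact h2
      · intro hpar
        rcases hadj with ⟨h1, h2⟩ | ⟨h1, h2⟩
        · exact h2
        · exfalso
          have : x i ∈ C := hprev.1 (by omega)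
          exact Finset.disjoint_left.mp hCd this h1
  -- all neighbours of x 0 are on the path
  have onpath : ∀ b, adj (x 0) b → ∃ j, j < N ∧ x j = b := by
    intro b hb
    by_cases hbl : b ∈ l
    · obtain ⟨⟨j, hj⟩, hxj⟩ := List.mem_iff_get.mp hbl
      exact ⟨j, by omega, by rw [getx j (by omega)]; exact hxj⟩
    · exfalso
      have hlne : l ≠ [] := by
        intro h; rw [h] at hlen; simp at hlen; omega
      obtain ⟨hd, tl, rfl⟩ := List.exists_cons_of_ne_nil hlne
      have hhd : x 0 = hd := by rw [getx 0 (by omega)]; rfl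
      have hc' : List.Chain' adj (b :: hd :: tl) :=
        List.isChain_cons_cons.mpr ⟨hhd ▸ adj_symm _ _ hb, hchain⟩
      have hn' : (b :: hd :: tl).Nodup := List.nodup_cons.mpr ⟨hbl, hnodup⟩
      have := hmax _ hc' hn'
      simp only [List.length_cons] at this hlen
      omega
  rcases hx0 with hu | hu
  · -- endpoint in A
    have alt := altA A B hdisj hu (by
      intro u v h
      rcases h with ⟨h1, h2, _⟩ | ⟨h1, h2, _⟩
      · exact Or.inl ⟨h1, h2⟩
      · exact Or.inr ⟨h2, h1⟩)
    set Tu := B.filter (fun b => D (x 0) b) with hTudef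
    have hTuk : k ≤ Tu.card := hA _ hu
    have hmemT : ∀ b ∈ Tu, ∃ j, j < N ∧ 0 < j ∧ j % 2 = 1 ∧ x j = b := by
      intro b hbT
      have hbB : b ∈ B := (Finset.mem_filter.mp hbT).1
      have hbD : D (x 0) b := (Finset.mem_filter.mp hbT).2
      obtain ⟨j, hj, hxj⟩ := onpath b (Or.inl ⟨hu, hbB, hbD⟩)
      have hbBx : x j ∈ B := by rw [hxj]; exact hbB
      have hj0 : 0 < j := by
        rcases Nat.eq_zero_or_pos j with h | h
        · exfalso; subst h; exact hnotboth _ hu hbBx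
        · exact h
      have hodd : j % 2 = 1 := by
        rcases Nat.mod_two_eq_zero_or_one j with h | h
        · exact absurd ((alt j hj).1 h) (fun hA' => hnotboth _ hA' hbBx)
        · exact h
      exact ⟨j, hj, hj0, hodd, hxj⟩
    set posf : V → ℕ := fun b =>
      if h : ∃ j, j < N ∧ 0 < j ∧ j % 2 = 1 ∧ x j = b then h.choose else 0 with hposf
    have hspec : ∀ b ∈ Tu, posf b < N ∧ 0 < posf b ∧ posf b % 2 = 1 ∧ x (posf b) = b := by
      intro b hbT
      have h := hmemT b hbT
      simp only [hposf, dif_pos h]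
      exact h.choose_spec
    set J := Tu.image posf with hJdef
    have hinjOn : Set.InjOn posf Tu := by
      intro b hb b' hb' h
      have h1 := (hspec b hb).2.2.2
      have h2 := (hspec b' hb').2.2.2
      rw [← h1, ← h2, h]
    have hJcard : k ≤ J.card := by
      rw [hJdef, Finset.card_image_of_injOn hinjOn]; exact hTuk
    have hJne : J.Nonempty := Finset.card_pos.mp (by omega)
    set js := J.max' hJne with hjs
    have hjsJ : js ∈ J := J.max'_mem hJne
    obtain ⟨bs, hbsT, hbsx⟩ := Finset.mem_image.mp hjsJ
    have hjsspec := hspec bs hbsT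
    have hjslt : js < N := by rw [← hbsx]; exact hjsspec.1
    have hjsodd : js % 2 = 1 := by rw [← hbsx]; exact hjsspec.2.2.1
    have hxjs : x js = bs := by rw [← hbsx]; exact hjsspec.2.2.2
    have hchord : D (x 0) (x js) := by rw [hxjs]; exact (Finset.mem_filter.mp hbsT).2
    set m := (js + 1) / 2 with hm
    have hjsm : 2 * m = js + 1 := by omega
    have hkm : k ≤ m := by
      have hsub : J ⊆ (Finset.range m).image (fun r => 2*r+1) := by
        intro j hj
        have hjle : j ≤ js := J.le_max' _ hj
        obtain ⟨b, hbT, rfl⟩ := Finset.mem_image.mp hj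
        have hj1 := (hspec b hbT).2.2.1
        exact Finset.mem_image.mpr ⟨(posf b - 1)/2, Finset.mem_range.mpr (by omega),
          by omega⟩
      calc k ≤ J.card := hJcard
        _ ≤ ((Finset.range m).image (fun r => 2*r+1)).card := Finset.card_le_card hsub
        _ ≤ m := le_trans Finset.card_image_le (by simp)
    refine ⟨m, hkm, lemF D m (by omega) x ?_ ?_ ?_ ?_⟩
    · intro i hi j hj hij; exact inj i (by omega) j (by omega) hij
    · intro i hi
      have hc := chain (2*i) (by omega)
      have hA1 : x (2*i) ∈ A := (alt (2*i) (by omega)).1 (by omega)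
      rcases hc with ⟨_, _, h3⟩ | ⟨_, h2, _⟩
      · exact h3
      · exact (hnotboth _ hA1 h2).elim
    · intro i hi
      have e : 2*i+1+1 = 2*i+2 := by omega
      have hc := chain (2*i+1) (by omega)
      rw [e] at hc
      have hA2 : x (2*i+2) ∈ A := (alt (2*i+2) (by omega)).1 (by omega)
      rcases hc with ⟨_, h2, _⟩ | ⟨_, _, h3⟩
      · exact (hnotboth _ hA2 h2).elim
      · exact h3
    · have e : 2*m - 1 = js := by omega
      rw [e]; exact hchord
  · -- endpoint in B
    have alt := altA B A hdisj.symm hu (by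
      intro u v h
      rcases h with ⟨h1, h2, _⟩ | ⟨h1, h2, _⟩
      · exact Or.inr ⟨h1, h2⟩
      · exact Or.inl ⟨h2, h1⟩)
    set Tu := A.filter (fun a => D a (x 0)) with hTudef
    have hTuk : k ≤ Tu.card := hB _ hu
    have hmemT : ∀ b ∈ Tu, ∃ j, j < N ∧ 0 < j ∧ j % 2 = 1 ∧ x j = b := by
      intro b hbT
      have hbA : b ∈ A := (Finset.mem_filter.mp hbT).1
      have hbD : D b (x 0) := (Finset.mem_filter.mp hbT).2
      obtain ⟨j, hj, hxj⟩ := onpath b (Or.inr ⟨hbA, hu, hbD⟩)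
      have hbAx : x j ∈ A := by rw [hxj]; exact hbA
      have hj0 : 0 < j := by
        rcases Nat.eq_zero_or_pos j with h | h
        · exfalso; subst h; exact hnotboth _ hbAx hu
        · exact h
      have hodd : j % 2 = 1 := by
        rcases Nat.mod_two_eq_zero_or_one j with h | h
        · exact absurd ((alt j hj).1 h) (fun hB' => hnotboth _ hbAx hB')
        · exact h
      exact ⟨j, hj, hj0, hodd, hxj⟩
    set posf : V → ℕ := fun b =>
      if h : ∃ j, j < N ∧ 0 < j ∧ j % 2 = 1 ∧ x j = b then h.choose else 0 with hposf
    have hspec : ∀ b ∈ Tu, posf b < N ∧ 0 < posf b ∧ posf b % 2 = 1 ∧ x (posf b) = b := by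
      intro b hbT
      have h := hmemT b hbT
      simp only [hposf, dif_pos h]
      exact h.choose_spec
    set J := Tu.image posf with hJdef
    have hinjOn : Set.InjOn posf Tu := by
      intro b hb b' hb' h
      have h1 := (hspec b hb).2.2.2
      have h2 := (hspec b' hb').2.2.2
      rw [← h1, ← h2, h]
    have hJcard : k ≤ J.card := by
      rw [hJdef, Finset.card_image_of_injOn hinjOn]; exact hTuk
    have hJne : J.Nonempty := Finset.card_pos.mp (by omega)
    set js := J.max' hJne with hjs
    have hjsJ : js ∈ J := J.max'_mem hJne
    obtain ⟨bs, hbsT, hbsx⟩ := Finset.mem_image.mp hjsJ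
    have hjsspec := hspec bs hbsT
    have hjslt : js < N := by rw [← hbsx]; exact hjsspec.1
    have hjsodd : js % 2 = 1 := by rw [← hbsx]; exact hjsspec.2.2.1
    have hxjs : x js = bs := by rw [← hbsx]; exact hjsspec.2.2.2
    have hchord : D (x js) (x 0) := by rw [hxjs]; exact (Finset.mem_filter.mp hbsT).2
    set m := (js + 1) / 2 with hm
    have hjsm : 2 * m = js + 1 := by omega
    have hkm : k ≤ m := by
      have hsub : J ⊆ (Finset.range m).image (fun r => 2*r+1) := by
        intro j hj
        have hjle : j ≤ js := J.le_max' _ hj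
        obtain ⟨b, hbT, rfl⟩ := Finset.mem_image.mp hj
        have hj1 := (hspec b hbT).2.2.1
        exact Finset.mem_image.mpr ⟨(posf b - 1)/2, Finset.mem_range.mpr (by omega),
          by omega⟩
      calc k ≤ J.card := hJcard
        _ ≤ ((Finset.range m).image (fun r => 2*r+1)).card := Finset.card_le_card hsub
        _ ≤ m := le_trans Finset.card_image_le (by simp)
    refine ⟨m, hkm, lemF D m (by omega) (fun r => x (js - r)) ?_ ?_ ?_ ?_⟩
    · intro i hi j hj hij
      have := inj (js - i) (by omega) (js - j) (by omega) hij
      omega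
    · intro i hi
      show D (x (js - (2*i))) (x (js - (2*i+1)))
      have e1 : js - 2*i = (js - (2*i+1)) + 1 := by omega
      have hc := chain (js - (2*i+1)) (by omega)
      rw [← e1] at hc
      have hA1 : x (js - 2*i) ∈ A := (alt (js - 2*i) (by omega)).2 (by omega)
      rw [e1] at hA1 hc ⊢
      rcases hc with ⟨h1, _, _⟩ | ⟨_, _, h3⟩
      · exact (hnotboth _ h1 (by
          have hB1 : x (js - (2*i+1)) ∈ B := (alt (js - (2*i+1)) (by omega)).1 (by omega)
          exact hB1)).elim
      · exact h3
    · intro i hi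
      show D (x (js - (2*i+2))) (x (js - (2*i+1)))
      have e2 : js - (2*i+1) = (js - (2*i+2)) + 1 := by omega
      have hc := chain (js - (2*i+2)) (by omega)
      have hA2 : x (js - (2*i+2)) ∈ A := (alt (js - (2*i+2)) (by omega)).2 (by omega)
      rw [← e2] at hc
      rw [e2] at hc ⊢
      rcases hc with ⟨_, _, h3⟩ | ⟨_, h2, _⟩
      · exact h3
      · exact (hnotboth _ hA2 h2).elim
    · show D (x (js - 0)) (x (js - (2*m-1)))
      have e : js - (2*m - 1) = 0 := by omega
      rw [Nat.sub_zero, e]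
      exact hchord



lemma lemDegen {V : Type*} [Fintype V] (G : SimpleGraph V) (c : ℕ) (hc : 0 < c)
    (h : ∀ W : Finset V, W.Nonempty → ∃ v ∈ W, (W.filter (G.Adj v)).card < c) :
    G.Colorable c := by
  have key : ∀ n (W : Finset V), W.card ≤ n →
      ∃ f : V → Fin c, ∀ x ∈ W, ∀ y ∈ W, G.Adj x y → f x ≠ f y := by
    intro n
    induction n with
    | zero =>
      intro W hW
      have : W = ∅ := Finset.card_eq_zero.mp (by omega)
      subst this
      exact ⟨fun _ => ⟨0, hc⟩, by simp⟩
    | succ n ih =>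
      intro W hW
      rcases Finset.eq_empty_or_nonempty W with rfl | hne
      · exact ⟨fun _ => ⟨0, hc⟩, by simp⟩
      · obtain ⟨v, hv, hdeg⟩ := h W hne
        obtain ⟨f, hf⟩ := ih (W.erase v) (by
          rw [Finset.card_erase_of_mem hv]
          have : 0 < W.card := Finset.card_pos.mpr hne
          omega)
        set used := ((W.erase v).filter (G.Adj v)).image f with hused
        have husedcard : used.card < c := by
          calc used.card ≤ ((W.erase v).filter (G.Adj v)).card := Finset.card_image_le
            _ ≤ (W.filter (G.Adj v)).card :=
              Finset.card_le_card (Finset.filter_subset_filter _ (Finset.erase_subset _ _))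
            _ < c := hdeg
        have hcompl : (usedᶜ : Finset (Fin c)).Nonempty := by
          rw [← Finset.card_pos, Finset.card_compl]
          simp only [Fintype.card_fin]
          omega
        obtain ⟨col, hcol⟩ := hcompl
        have hcolnot : col ∉ used := Finset.mem_compl.mp hcol
        refine ⟨Function.update f v col, ?_⟩
        intro x hx y hy hxy
        have hne' : x ≠ y := hxy.ne
        by_cases hxv : x = v
        · have hyv : y ≠ v := fun hh => hne' (hxv.trans hh.symm)
          rw [hxv, Function.update_self, Function.update_of_ne hyv]
          intro heq
          refine hcolnot (heq ▸ Finset.mem_image_of_mem f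
            (Finset.mem_filter.mpr ⟨Finset.mem_erase.mpr ⟨hyv, hy⟩, ?_⟩))
          rw [← hxv]; exact hxy
        · by_cases hyv : y = v
          · rw [hyv, Function.update_self, Function.update_of_ne hxv]
            intro heq
            refine hcolnot (heq ▸ Finset.mem_image_of_mem f
              (Finset.mem_filter.mpr ⟨Finset.mem_erase.mpr ⟨hxv, hx⟩, ?_⟩))
            have : G.Adj x v := by rw [← hyv]; exact hxy
            exact this.symm
          · rw [Function.update_of_ne hxv, Function.update_of_ne hyv]
            exact hf x (Finset.mem_erase.mpr ⟨hxv, hx⟩) y (Finset.mem_erase.mpr ⟨hyv, hy⟩) hxy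
  obtain ⟨f, hf⟩ := key (Fintype.card V) Finset.univ (by simp)
  exact ⟨SimpleGraph.Coloring.mk f
    (fun {x y} hadj => hf x (Finset.mem_univ x) y (Finset.mem_univ y) hadj)⟩

lemma flipcount2 {V : Type*} [Fintype V] (u v : V) (huv : u ≠ v) (a b b' : Bool) :
    (Finset.univ.filter (fun f : V → Bool => f u = a ∧ f v = b)).card
      = (Finset.univ.filter (fun f : V → Bool => f u = a ∧ f v = b')).card := by
  apply Finset.card_bij' (fun f _ => Function.update f v b') (fun f _ => Function.update f v b)
  · intro f hf
    have hf' : f u = a ∧ f v = b := by simpa using hf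
    funext w
    by_cases hw : w = v
    · subst hw; rw [Function.update_self]; exact hf'.2.symm
    · rw [Function.update_of_ne hw, Function.update_of_ne hw]
  · intro f hf
    have hf' : f u = a ∧ f v = b' := by simpa using hf
    funext w
    by_cases hw : w = v
    · subst hw; rw [Function.update_self]; exact hf'.2.symm
    · rw [Function.update_of_ne hw, Function.update_of_ne hw]
  · intro f hf
    have hf' : f u = a ∧ f v = b := by simpa using hf
    refine Finset.mem_filter.mpr ⟨Finset.mem_univ _, ?_, ?_⟩
    · rw [Function.update_of_ne huv]; exact hf'.1
    · rw [Function.update_self]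
  · intro f hf
    have hf' : f u = a ∧ f v = b' := by simpa using hf
    refine Finset.mem_filter.mpr ⟨Finset.mem_univ _, ?_, ?_⟩
    · rw [Function.update_of_ne huv]; exact hf'.1
    · rw [Function.update_self]

lemma flipcount1 {V : Type*} [Fintype V] (u v : V) (huv : u ≠ v) (a a' b : Bool) :
    (Finset.univ.filter (fun f : V → Bool => f u = a ∧ f v = b)).card
      = (Finset.univ.filter (fun f : V → Bool => f u = a' ∧ f v = b)).card := by
  apply Finset.card_bij' (fun f _ => Function.update f u a') (fun f _ => Function.update f u a)
  · intro f hf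
    have hf' : f u = a ∧ f v = b := by simpa using hf
    funext w
    by_cases hw : w = u
    · subst hw; rw [Function.update_self]; exact hf'.1.symm
    · rw [Function.update_of_ne hw, Function.update_of_ne hw]
  · intro f hf
    have hf' : f u = a' ∧ f v = b := by simpa using hf
    funext w
    by_cases hw : w = u
    · subst hw; rw [Function.update_self]; exact hf'.1.symm
    · rw [Function.update_of_ne hw, Function.update_of_ne hw]
  · intro f hf
    have hf' : f u = a ∧ f v = b := by simpa using hf
    refine Finset.mem_filter.mpr ⟨Finset.mem_univ _, ?_, ?_⟩
    · rw [Function.update_self]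
    · rw [Function.update_of_ne (Ne.symm huv)]; exact hf'.2
  · intro f hf
    have hf' : f u = a' ∧ f v = b := by simpa using hf
    refine Finset.mem_filter.mpr ⟨Finset.mem_univ _, ?_, ?_⟩
    · rw [Function.update_self]
    · rw [Function.update_of_ne (Ne.symm huv)]; exact hf'.2

lemma splitcount {V : Type*} [Fintype V] (u v : V) (a : Bool) :
    (Finset.univ.filter (fun f : V → Bool => f u = a)).card
      = (Finset.univ.filter (fun f : V → Bool => f u = a ∧ f v = true)).card
        + (Finset.univ.filter (fun f : V → Bool => f u = a ∧ f v = false)).card := by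
  have hone := Finset.card_filter_add_card_filter_not
    (s := Finset.univ.filter (fun f : V → Bool => f u = a))
    (p := fun f : V → Bool => f v = true)
  have hneg : (Finset.univ.filter (fun f : V → Bool => f u = a)).filter
        (fun f : V → Bool => ¬ (f v = true))
      = (Finset.univ.filter (fun f : V → Bool => f u = a)).filter
        (fun f : V → Bool => f v = false) :=
    Finset.filter_congr (by intro f _; simp [Bool.not_eq_true])
  rw [hneg, Finset.filter_filter, Finset.filter_filter] at hone
  exact hone.symm

lemma quartercount {V : Type*} [Fintype V] (u v : V) (huv : u ≠ v) :
    4 * (Finset.univ.filter (fun f : V → Bool => f u = true ∧ f v = false)).card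
      = Fintype.card (V → Bool) := by
  have e1 := flipcount2 u v huv true true false
  have e2 := flipcount2 u v huv false true false
  have e3 := flipcount1 u v huv true false false
  have s1 := splitcount u v true
  have s2 := splitcount u v false
  have stot : Fintype.card (V → Bool)
      = (Finset.univ.filter (fun f : V → Bool => f u = true)).card
        + (Finset.univ.filter (fun f : V → Bool => f u = false)).card := by
    have hone := Finset.card_filter_add_card_filter_not
      (s := (Finset.univ : Finset (V → Bool))) (p := fun f : V → Bool => f u = true)
    have hneg : Finset.univ.filter (fun f : V → Bool => ¬ (f u = true))
        = Finset.univ.filter (fun f : V → Bool => f u = false) :=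
      Finset.filter_congr (by intro f _; simp [Bool.not_eq_true])
    rw [hneg] at hone
    rw [hone]
    exact Finset.card_univ.symm
  rw [stot, s1, s2, e1, e2, ← e3]; ring



lemma existsCut {V : Type*} [Fintype V] (E : Finset (V × V)) (hE : ∀ p ∈ E, p.1 ≠ p.2) :
    ∃ f : V → Bool, E.card ≤ 4 * (E.filter (fun p => f p.1 = true ∧ f p.2 = false)).card := by
  haveI : Nonempty (V → Bool) := ⟨fun _ => true⟩
  have swap : ∑ f : V → Bool, (E.filter (fun p => f p.1 = true ∧ f p.2 = false)).card
      = ∑ p ∈ E, (Finset.univ.filter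
          (fun f : V → Bool => f p.1 = true ∧ f p.2 = false)).card := by
    simp only [Finset.card_filter]
    exact Finset.sum_comm
  have total : ∑ f : V → Bool, 4 * (E.filter (fun p => f p.1 = true ∧ f p.2 = false)).card
      = E.card * Fintype.card (V → Bool) := by
    rw [← Finset.mul_sum, swap, Finset.mul_sum]
    rw [Finset.sum_congr rfl (fun p hp => quartercount p.1 p.2 (hE p hp))]
    rw [Finset.sum_const, smul_eq_mul]
  have hsum : ∑ f : V → Bool, E.card
      ≤ ∑ f : V → Bool, 4 * (E.filter (fun p => f p.1 = true ∧ f p.2 = false)).card := by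
    rw [total, Finset.sum_const, smul_eq_mul, Finset.card_univ, mul_comm]
  obtain ⟨f, _, hf⟩ := Finset.exists_le_of_sum_le Finset.univ_nonempty hsum
  exact ⟨f, hf⟩

/-- Cohen–Havet–Lochet–Nisse: for `k ≥ 2`, every oriented graph (no loops, no
digons) with chromatic number at least `8k - 7` contains an antidirected cycle
of length at least `2k`. -/
theorem stmt9 {V : Type*} [Fintype V] (D : V → V → Prop) (k : ℕ) (hk : 2 ≤ k)
    (horiented : ∀ x y, D x y → ¬ D y x)
    (h : ((8 * k - 7 : ℕ) : ℕ∞) ≤ (SimpleGraph.fromRel D).chromaticNumber) :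
    ∃ m : ℕ, k ≤ m ∧ HasAntidirCycle D m := by
  set G := SimpleGraph.fromRel D with hG
  -- Step 1: a nonempty set W of minimum degree ≥ 8k-8
  have hW : ∃ W : Finset V, W.Nonempty ∧ ∀ v ∈ W, 8*k-8 ≤ (W.filter (G.Adj v)).card := by
    by_contra hno
    push_neg at hno
    have hcol := lemDegen G (8*k-8) (by omega) (by
      intro W hWne
      obtain ⟨v, hv, hlt⟩ := hno W hWne
      exact ⟨v, hv, by
        have e : ∀ (I1 I2 : DecidablePred (G.Adj v)),
            @Finset.filter V (G.Adj v) I1 W = @Finset.filter V (G.Adj v) I2 W :=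
          fun I1 I2 => by rw [Subsingleton.elim I1 I2]
        exact lt_of_eq_of_lt (congrArg Finset.card (e _ _)) hlt⟩)
    have hle := hcol.chromaticNumber_le
    have hcontra := le_trans h hle
    rw [Nat.cast_le] at hcontra
    omega
  obtain ⟨W, hWne, hWdeg⟩ := hW
  have hWpos : 1 ≤ W.card := Finset.card_pos.mpr hWne
  -- Step 2: count arcs inside W
  set E := (W ×ˢ W).filter (fun p => D p.1 p.2) with hE
  have hmemE : ∀ p ∈ E, p.1 ∈ W ∧ p.2 ∈ W ∧ D p.1 p.2 := by
    intro p hp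
    rw [hE, Finset.mem_filter, Finset.mem_product] at hp
    exact ⟨hp.1.1, hp.1.2, hp.2⟩
  have hout : E.card = ∑ v ∈ W, (W.filter (fun u => D v u)).card := by
    rw [Finset.card_eq_sum_card_fiberwise (f := Prod.fst) (t := W)
      (fun p hp => (hmemE p hp).1)]
    apply Finset.sum_congr rfl
    intro v hv
    apply Finset.card_bij (fun p _ => p.2)
    · intro p hp
      rw [Finset.mem_filter] at hp
      have h1 := hmemE p hp.1
      rw [Finset.mem_filter]
      exact ⟨h1.2.1, hp.2 ▸ h1.2.2⟩
    · intro p hp q hq hpq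
      rw [Finset.mem_filter] at hp hq
      exact Prod.ext (hp.2.trans hq.2.symm) hpq
    · intro u hu
      rw [Finset.mem_filter] at hu
      refine ⟨(v, u), ?_, rfl⟩
      rw [Finset.mem_filter, hE, Finset.mem_filter, Finset.mem_product]
      exact ⟨⟨⟨hv, hu.1⟩, hu.2⟩, rfl⟩
  have hin : E.card = ∑ v ∈ W, (W.filter (fun u => D u v)).card := by
    rw [Finset.card_eq_sum_card_fiberwise (f := Prod.snd) (t := W)
      (fun p hp => (hmemE p hp).2.1)]
    apply Finset.sum_congr rfl
    intro v hv
    apply Finset.card_bij (fun p _ => p.1)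
    · intro p hp
      rw [Finset.mem_filter] at hp
      have h1 := hmemE p hp.1
      rw [Finset.mem_filter]
      exact ⟨h1.1, hp.2 ▸ h1.2.2⟩
    · intro p hp q hq hpq
      rw [Finset.mem_filter] at hp hq
      exact Prod.ext hpq (hp.2.trans hq.2.symm)
    · intro u hu
      rw [Finset.mem_filter] at hu
      refine ⟨(u, v), ?_, rfl⟩
      rw [Finset.mem_filter, hE, Finset.mem_filter, Finset.mem_product]
      exact ⟨⟨⟨hu.1, hv⟩, hu.2⟩, rfl⟩
  have hdegsum : (8*k-8) * W.card ≤ 2 * E.card := by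
    have hper : ∀ v ∈ W, (W.filter (G.Adj v)).card
        ≤ (W.filter (fun u => D v u)).card + (W.filter (fun u => D u v)).card := by
      intro v hv
      have hsub : W.filter (G.Adj v)
          ⊆ W.filter (fun u => D v u) ∪ W.filter (fun u => D u v) := by
        intro u hu
        rw [Finset.mem_filter] at hu
        have := hu.2
        rw [hG, SimpleGraph.fromRel_adj] at this
        rcases this.2 with hd | hd
        · exact Finset.mem_union_left _ (Finset.mem_filter.mpr ⟨hu.1, hd⟩)
        · exact Finset.mem_union_right _ (Finset.mem_filter.mpr ⟨hu.1, hd⟩)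
      exact le_trans (Finset.card_le_card hsub) (Finset.card_union_le _ _)
    calc (8*k-8) * W.card = ∑ _v ∈ W, (8*k-8) := by
          rw [Finset.sum_const, smul_eq_mul, mul_comm]
      _ ≤ ∑ v ∈ W, ((W.filter (fun u => D v u)).card + (W.filter (fun u => D u v)).card) :=
          Finset.sum_le_sum (fun v hv => le_trans (hWdeg v hv) (hper v hv))
      _ = E.card + E.card := by rw [Finset.sum_add_distrib, ← hout, ← hin]
      _ = 2 * E.card := by ring
  -- Step 3: directed cut
  obtain ⟨f, hcut⟩ := existsCut E (by
    intro p hp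
    intro heq
    exact horiented _ _ (hmemE p hp).2.2 (heq ▸ (hmemE p hp).2.2))
  set A₀ := W.filter (fun v => f v = true) with hA₀
  set B₀ := W.filter (fun v => f v = false) with hB₀
  have hdisj0 : Disjoint A₀ B₀ := by
    rw [Finset.disjoint_left]
    intro v hv hv'
    rw [hA₀, Finset.mem_filter] at hv
    rw [hB₀, Finset.mem_filter] at hv'
    rw [hv.2] at hv'
    exact absurd hv'.2 (by simp)
  have hAB : A₀.card + B₀.card = W.card := by
    have hone := Finset.card_filter_add_card_filter_not
      (s := W) (p := fun v => f v = true)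
    have hneg : W.filter (fun v => ¬ (f v = true)) = W.filter (fun v => f v = false) :=
      Finset.filter_congr (by intro v _; simp [Bool.not_eq_true])
    rw [hneg] at hone
    exact hone
  have hEq : (A₀ ×ˢ B₀).filter (fun p => D p.1 p.2)
      = E.filter (fun p => f p.1 = true ∧ f p.2 = false) := by
    ext p
    simp only [hA₀, hB₀, hE, Finset.mem_filter, Finset.mem_product]
    tauto
  have hlow : (k-1) * (A₀.card + B₀.card - 1)
      < ((A₀ ×ˢ B₀).filter (fun p => D p.1 p.2)).card := by
    rw [hEq]
    set e := (E.filter (fun p => f p.1 = true ∧ f p.2 = false)).card with he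
    have h8 : 8*k-8 = 8*(k-1) := by omega
    rw [h8, mul_assoc] at hdegsum
    have step3 : (k-1) * W.card ≤ e := by omega
    rw [hAB]
    have hmulsucc : (k-1) * (W.card - 1) + (k-1) = (k-1) * W.card := by
      rw [← Nat.mul_succ]
      congr 1
      omega
    omega
  obtain ⟨A', B', hsubA, hsubB, hA'ne, hA', hB'⟩ :=
    lemC D k hk (A₀.card + B₀.card) A₀ B₀ le_rfl hlow
  exact lemG D k hk A' B' (hdisj0.mono hsubA hsubB) hA'ne hA' hB'
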